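/- Let X be a Banach space, let D₁ ⊂ X and D₂ ⊂ ℝ^{d₂} be compact sets, let A be a compact subset of C(D₁), and let G : A → C(D₂) be a continuous (possibly nonlinear) operator. Then for every ε > 0 there exist a positive integer p, a continuous map G₁ : A → ℝᵖ, and a continuous function f : D₂ → ℝᵖ such that |G(a)(y) − ⟨G₁(a), f(y)⟩| < ε for all a ∈ A and all y ∈ D₂, where ⟨·,·⟩ denotes the dot product in ℝᵖ. -/
import Mathlib


/-- Theorem 1 of the paper.  Let `X` be a Banach space, `D₁ ⊂ X` and `D₂ ⊂ ℝ^{d₂}` compact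
sets, `A` a compact subset of `C(D₁)`, and `G : A → C(D₂)` a continuous operator.  Then for
every `ε > 0` there exist a positive integer `p`, a continuous map `G₁ : A → ℝᵖ`, and a
continuous function `f : D₂ → ℝᵖ` such that
`|G(a)(y) − ⟨G₁(a), f(y)⟩| < ε` for all `a ∈ A`, `y ∈ D₂`. -/
theorem rdo_branch_universal_approximation
    {X : Type*} [NormedAddCommGroup X] [NormedSpace ℝ X] [CompleteSpace X]
    {d₂ : ℕ} (D₁ : Set X) (D₂ : Set (EuclideanSpace ℝ (Fin d₂)))
    (hD₁ : IsCompact D₁) (hD₂ : IsCompact D₂)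
    (A : Set C(D₁, ℝ)) (hA : IsCompact A)
    (G : A → C(D₂, ℝ)) (hG : Continuous G)
    (ε : ℝ) (hε : 0 < ε) :
    ∃ (p : ℕ), 0 < p ∧
      ∃ (G₁ : A → (Fin p → ℝ)) (f : D₂ → (Fin p → ℝ)),
        Continuous G₁ ∧ Continuous f ∧
        ∀ (a : A) (y : D₂), |G a y - ∑ k, G₁ a k * f y k| < ε := by
  by_cases hAe : Nonempty A
  case neg =>
    exact ⟨1, one_pos, fun _ => 0, fun _ => 0, continuous_const, continuous_const,
      fun a => (hAe ⟨a⟩).elim⟩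
  haveI : CompactSpace D₂ := isCompact_iff_compactSpace.mp hD₂
  haveI : CompactSpace A := isCompact_iff_compactSpace.mp hA
  have hc : IsCompact (Set.range G) := isCompact_range hG
  obtain ⟨t, -, htf, hts⟩ := hc.finite_cover_balls (half_pos hε)
  haveI := htf.fintype
  obtain ⟨a₀⟩ := hAe
  obtain ⟨c₀, hc₀t, _⟩ := Set.mem_iUnion₂.mp (hts ⟨a₀, rfl⟩)
  haveI : Nonempty t := ⟨⟨c₀, hc₀t⟩⟩
  set p := Fintype.card t with hp
  have hp0 : 0 < p := Fintype.card_pos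
  let e : Fin p ≃ t := (Fintype.equivFin t).symm
  let φ : A → Fin p → ℝ := fun a k => max 0 (ε/2 - dist (G a) ((e k : t) : C(D₂,ℝ)))
  have hφ0 : ∀ a k, 0 ≤ φ a k := fun a k => le_max_left _ _
  have hφc : ∀ k, Continuous fun a => φ a k := fun k =>
    continuous_const.max (continuous_const.sub (hG.dist continuous_const))
  set S : A → ℝ := fun a => ∑ k, φ a k with hS
  have hSpos : ∀ a, 0 < S a := by
    intro a
    obtain ⟨c, hct, hcb⟩ := Set.mem_iUnion₂.mp (hts ⟨a, rfl⟩)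
    refine Finset.sum_pos' (fun k _ => hφ0 a k) ⟨e.symm ⟨c, hct⟩, Finset.mem_univ _, ?_⟩
    have hd : dist (G a) c < ε/2 := hcb
    have : φ a (e.symm ⟨c, hct⟩) = max 0 (ε/2 - dist (G a) c) := by
      simp [φ, Equiv.apply_symm_apply]
    rw [this]
    exact lt_max_of_lt_right (sub_pos.mpr hd)
  set G₁ : A → Fin p → ℝ := fun a k => φ a k / S a with hG₁
  set f : D₂ → Fin p → ℝ := fun y k => ((e k : t) : C(D₂,ℝ)) y with hf
  refine ⟨p, hp0, G₁, f, ?_, ?_, ?_⟩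
  · exact continuous_pi fun k =>
      (hφc k).div (continuous_finset_sum _ fun k _ => hφc k) (fun a => (hSpos a).ne')
  · exact continuous_pi fun k => ((e k : t) : C(D₂,ℝ)).continuous
  · intro a y
    have hG₁nn : ∀ k, 0 ≤ G₁ a k := fun k => div_nonneg (hφ0 a k) (hSpos a).le
    have hsum1 : ∑ k, G₁ a k = 1 := by
      simp only [hG₁, ← Finset.sum_div]
      exact div_self (hSpos a).ne'
    have key : ∀ k, G₁ a k * |G a y - f y k| ≤ G₁ a k * (ε/2) := by
      intro k
      rcases eq_or_lt_of_le (hφ0 a k) with h | h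
      · have hz : G₁ a k = 0 := by simp [hG₁, ← h]
        simp [hz]
      · have hd : dist (G a) ((e k : t) : C(D₂,ℝ)) < ε/2 := by
          by_contra hle
          push_neg at hle
          have hz : φ a k = max 0 (ε/2 - dist (G a) ((e k : t) : C(D₂,ℝ))) := rfl
          rw [max_eq_left (sub_nonpos.mpr hle)] at hz
          exact absurd hz h.ne'
        have habs : |G a y - f y k| ≤ dist (G a) ((e k : t) : C(D₂,ℝ)) := by
          have h2 := ContinuousMap.dist_apply_le_dist (f := G a)
            (g := ((e k : t) : C(D₂,ℝ))) y
          simpa [Real.dist_eq, hf] using h2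
        exact mul_le_mul_of_nonneg_left (habs.trans hd.le) (hG₁nn k)
    have hrw : ∑ k, G₁ a k * (G a y - f y k) = G a y - ∑ k, G₁ a k * f y k := by
      simp [mul_sub, Finset.sum_sub_distrib, ← Finset.sum_mul, hsum1]
    calc |G a y - ∑ k, G₁ a k * f y k|
        = |∑ k, G₁ a k * (G a y - f y k)| := by rw [hrw]
      _ ≤ ∑ k, |G₁ a k * (G a y - f y k)| := Finset.abs_sum_le_sum_abs _ _
      _ = ∑ k, G₁ a k * |G a y - f y k| := by
          refine Finset.sum_congr rfl fun k _ => ?_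
          rw [abs_mul, abs_of_nonneg (hG₁nn k)]
      _ ≤ ∑ k, G₁ a k * (ε/2) := Finset.sum_le_sum fun k _ => key k
      _ = ε/2 := by rw [← Finset.sum_mul, hsum1, one_mul]
      _ < ε := half_lt_self hε
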